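/- (Proposition 1: subspace-based relative TO estimation.) Let K, L be positive integers, A ∈ ℂ^{K×L} with A†A invertible, and h ∈ ℂ^K. For Δτ ∈ ℝ define F(Δτ) = Re( h† · diag(a(Δτ)) · P_n(A) · diag(a(Δτ))† · h ), and for b ∈ ℂ^L and s > 0 define the Gaussian log-likelihood L(Δτ, b, s) = −K·log π − K·log s − (1/s)·‖h − diag(a(Δτ))·A·b‖². If F(Δτ) > 0, then sup over b ∈ ℂ^L and s > 0 of L(Δτ, b, s) equals −K·log(π·e) − K·log(F(Δτ)/K). Consequently, for any Δτ₁, Δτ₂ with F(Δτ₁) > 0 and F(Δτ₂) > 0, the profiled likelihood at Δτ₁ is at least that at Δτ₂ if and only if F(Δτ₁) ≤ F(Δτ₂); i.e., maximum-likelihood estimation of the relative time offset is equivalent to minimizing the quadratic form F. -/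

import Mathlib

open Matrix

noncomputable section

/-- Steering vector of delay `τ`: entries `exp(−2πi·k·Δf·τ)`, k = 0,…,K−1. -/
def steer (K : ℕ) (Δf τ : ℝ) : Fin K → ℂ :=
  fun k => Complex.exp (-(2 * (Real.pi : ℂ) * Complex.I * ((k : ℕ) : ℂ) * (Δf : ℂ) * (τ : ℂ)))

/-- Noise-subspace projection matrix `Pₙ(A) = I − A(A†A)⁻¹A†`. -/
def Pn {K L : ℕ} (A : Matrix (Fin K) (Fin L) ℂ) : Matrix (Fin K) (Fin K) ℂ :=
  1 - A * (Aᴴ * A)⁻¹ * Aᴴ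

/-- Quadratic objective `F(Δτ) = Re(h† · diag(a(Δτ)) · Pₙ(A) · diag(a(Δτ))† · h)`. -/
def Fobj (K : ℕ) (Δf : ℝ) {L : ℕ} (A : Matrix (Fin K) (Fin L) ℂ) (h : Fin K → ℂ)
    (Δτ : ℝ) : ℝ :=
  (star h ⬝ᵥ ((Matrix.diagonal (steer K Δf Δτ) * Pn A *
      (Matrix.diagonal (steer K Δf Δτ))ᴴ) *ᵥ h)).re

/-- Gaussian log-likelihood
`L(Δτ, b, s) = −K·log π − K·log s − (1/s)·‖h − diag(a(Δτ))·A·b‖²`. -/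
def loglik (K : ℕ) (Δf : ℝ) {L : ℕ} (A : Matrix (Fin K) (Fin L) ℂ) (h : Fin K → ℂ)
    (Δτ : ℝ) (b : Fin L → ℂ) (s : ℝ) : ℝ :=
  -(K : ℝ) * Real.log Real.pi - (K : ℝ) * Real.log s -
    (1 / s) * ‖(WithLp.equiv 2 (Fin K → ℂ)).symm
        (h - (Matrix.diagonal (steer K Δf Δτ)) *ᵥ (A *ᵥ b))‖ ^ 2

lemma re_star_dot_self {K : ℕ} (v : Fin K → ℂ) :
    (star v ⬝ᵥ v).re = ∑ i, ‖v i‖ ^ 2 := by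
  simp [dotProduct, Complex.re_sum, Pi.star_apply, ← Complex.normSq_eq_norm_sq,
    Complex.normSq_eq_conj_mul_self, Complex.sq_norm, Complex.normSq_apply]

lemma norm_equiv_sq {K : ℕ} (v : Fin K → ℂ) :
    ‖(WithLp.equiv 2 (Fin K → ℂ)).symm v‖ ^ 2 = (star v ⬝ᵥ v).re := by
  rw [EuclideanSpace.norm_eq, Real.sq_sqrt (by positivity), re_star_dot_self]
  rfl

lemma Pn_mul_A {K L : ℕ} (A : Matrix (Fin K) (Fin L) ℂ) (hA : IsUnit (Aᴴ * A)) :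
    Pn A * A = 0 := by
  have hinv : (Aᴴ * A)⁻¹ * (Aᴴ * A) = 1 :=
    Matrix.nonsing_inv_mul _ ((Matrix.isUnit_iff_isUnit_det _).mp hA)
  simp only [Pn, Matrix.sub_mul, Matrix.one_mul]
  rw [Matrix.mul_assoc, Matrix.mul_assoc, hinv, Matrix.mul_one, sub_self]

lemma Pn_herm {K L : ℕ} (A : Matrix (Fin K) (Fin L) ℂ) : (Pn A)ᴴ = Pn A := by
  simp [Pn, Matrix.conjTranspose_sub, Matrix.conjTranspose_mul,
    Matrix.conjTranspose_nonsing_inv, Matrix.mul_assoc]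

lemma Pn_idem {K L : ℕ} (A : Matrix (Fin K) (Fin L) ℂ) (hA : IsUnit (Aᴴ * A)) :
    Pn A * Pn A = Pn A := by
  nth_rewrite 2 [Pn]
  rw [Matrix.mul_sub, Matrix.mul_one, Matrix.mul_assoc A, ← Matrix.mul_assoc (Pn A) A,
    Pn_mul_A A hA, Matrix.zero_mul, sub_zero]

lemma A_conjT_mul_Pn {K L : ℕ} (A : Matrix (Fin K) (Fin L) ℂ) (hA : IsUnit (Aᴴ * A)) :
    Aᴴ * Pn A = 0 := by
  have : (Pn A * A)ᴴ = 0 := by rw [Pn_mul_A A hA]; simp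
  rwa [Matrix.conjTranspose_mul, Pn_herm] at this

lemma steer_abs {K : ℕ} (Δf τ : ℝ) (k : Fin K) : ‖steer K Δf τ k‖ = 1 := by
  have : steer K Δf τ k = Complex.exp (↑(-(2 * Real.pi * (k : ℝ) * Δf * τ)) * Complex.I) := by
    rw [steer]; push_cast; ring_nf
  rw [this, Complex.norm_exp_ofReal_mul_I]

lemma steer_mul_star {K : ℕ} (Δf τ : ℝ) :
    (steer K Δf τ) * star (steer K Δf τ) = 1 := by
  funext k
  simp only [Pi.mul_apply, Pi.star_apply, Pi.one_apply, RCLike.star_def]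
  rw [Complex.mul_conj, ← Complex.sq_norm, steer_abs]; norm_num

lemma D_mul_Dh {K : ℕ} (Δf τ : ℝ) :
    Matrix.diagonal (steer K Δf τ) * (Matrix.diagonal (steer K Δf τ))ᴴ = 1 := by
  rw [Matrix.diagonal_conjTranspose, Matrix.diagonal_mul_diagonal]
  have h2 : (fun i => steer K Δf τ i * star (steer K Δf τ) i) = (1 : Fin K → ℂ) :=
    funext fun k => congrFun (steer_mul_star Δf τ) k
  rw [h2]; exact Matrix.diagonal_one

lemma Dh_mul_D {K : ℕ} (Δf τ : ℝ) :
    (Matrix.diagonal (steer K Δf τ))ᴴ * Matrix.diagonal (steer K Δf τ) = 1 := by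
  rw [Matrix.diagonal_conjTranspose, Matrix.diagonal_mul_diagonal]
  have h2 : (fun i => star (steer K Δf τ) i * steer K Δf τ i) = (1 : Fin K → ℂ) :=
    funext fun k => by rw [← congrFun (steer_mul_star Δf τ) k]; exact mul_comm _ _
  rw [h2]; exact Matrix.diagonal_one

lemma dot_D_mulVec {K : ℕ} (Δf τ : ℝ) (u : Fin K → ℂ) :
    star (Matrix.diagonal (steer K Δf τ) *ᵥ u) ⬝ᵥ (Matrix.diagonal (steer K Δf τ) *ᵥ u)
      = star u ⬝ᵥ u := by
  rw [Matrix.star_mulVec, Matrix.dotProduct_mulVec, Matrix.vecMul_vecMul, Dh_mul_D,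
    Matrix.vecMul_one]

lemma resid_rewrite {K L : ℕ} (Δf τ : ℝ) (A : Matrix (Fin K) (Fin L) ℂ)
    (h : Fin K → ℂ) (b : Fin L → ℂ) :
    h - Matrix.diagonal (steer K Δf τ) *ᵥ (A *ᵥ b) =
      Matrix.diagonal (steer K Δf τ) *ᵥ
        (Pn A *ᵥ ((Matrix.diagonal (steer K Δf τ))ᴴ *ᵥ h) -
         A *ᵥ (b - ((Aᴴ * A)⁻¹ * Aᴴ) *ᵥ ((Matrix.diagonal (steer K Δf τ))ᴴ *ᵥ h))) := by
  set D := Matrix.diagonal (steer K Δf τ) with hD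
  set g := Dᴴ *ᵥ h with hg
  have hDg : D *ᵥ g = h := by
    rw [hg, Matrix.mulVec_mulVec, hD, D_mul_Dh, Matrix.one_mulVec]
  have inner : Pn A *ᵥ g - A *ᵥ (b - ((Aᴴ * A)⁻¹ * Aᴴ) *ᵥ g) = g - A *ᵥ b := by
    simp only [Pn, Matrix.sub_mulVec, Matrix.one_mulVec, Matrix.mulVec_sub,
      Matrix.mulVec_mulVec, Matrix.mul_assoc]
    abel
  rw [inner, Matrix.mulVec_sub, hDg]

lemma cross1 {K L : ℕ} (A : Matrix (Fin K) (Fin L) ℂ) (hA : IsUnit (Aᴴ * A))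
    (g : Fin K → ℂ) (c : Fin L → ℂ) :
    star (Pn A *ᵥ g) ⬝ᵥ (A *ᵥ c) = 0 := by
  rw [Matrix.star_mulVec, Pn_herm, Matrix.dotProduct_mulVec, Matrix.vecMul_vecMul,
    Pn_mul_A A hA, Matrix.vecMul_zero, zero_dotProduct]

lemma cross2 {K L : ℕ} (A : Matrix (Fin K) (Fin L) ℂ) (hA : IsUnit (Aᴴ * A))
    (g : Fin K → ℂ) (c : Fin L → ℂ) :
    star (A *ᵥ c) ⬝ᵥ (Pn A *ᵥ g) = 0 := by
  rw [Matrix.star_mulVec, Matrix.dotProduct_mulVec, Matrix.vecMul_vecMul,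
    A_conjT_mul_Pn A hA, Matrix.vecMul_zero, zero_dotProduct]

lemma Fobj_dot {K L : ℕ} (Δf τ : ℝ) (A : Matrix (Fin K) (Fin L) ℂ) (hA : IsUnit (Aᴴ * A))
    (h : Fin K → ℂ) :
    star h ⬝ᵥ ((Matrix.diagonal (steer K Δf τ) * Pn A *
        (Matrix.diagonal (steer K Δf τ))ᴴ) *ᵥ h) =
      star (Pn A *ᵥ ((Matrix.diagonal (steer K Δf τ))ᴴ *ᵥ h)) ⬝ᵥ
        (Pn A *ᵥ ((Matrix.diagonal (steer K Δf τ))ᴴ *ᵥ h)) := by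
  set D := Matrix.diagonal (steer K Δf τ) with hD
  simp only [Matrix.star_mulVec, Pn_herm, Matrix.conjTranspose_conjTranspose,
    Matrix.dotProduct_mulVec, Matrix.vecMul_vecMul, Matrix.mul_assoc]
  rw [← Matrix.mul_assoc (Pn A) (Pn A) Dᴴ, Pn_idem A hA]

lemma resid_sq {K L : ℕ} (Δf : ℝ) (A : Matrix (Fin K) (Fin L) ℂ) (hA : IsUnit (Aᴴ * A))
    (h : Fin K → ℂ) (τ : ℝ) (b : Fin L → ℂ) :
    ‖(WithLp.equiv 2 (Fin K → ℂ)).symm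
        (h - (Matrix.diagonal (steer K Δf τ)) *ᵥ (A *ᵥ b))‖ ^ 2 =
      Fobj K Δf A h τ +
      (star (A *ᵥ (b - ((Aᴴ * A)⁻¹ * Aᴴ) *ᵥ ((Matrix.diagonal (steer K Δf τ))ᴴ *ᵥ h))) ⬝ᵥ
       (A *ᵥ (b - ((Aᴴ * A)⁻¹ * Aᴴ) *ᵥ ((Matrix.diagonal (steer K Δf τ))ᴴ *ᵥ h)))).re := by
  rw [norm_equiv_sq, resid_rewrite Δf τ A h b, dot_D_mulVec]
  have expand : ∀ (x w : Fin K → ℂ), star (x - w) ⬝ᵥ (x - w) =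
      star x ⬝ᵥ x - star x ⬝ᵥ w - (star w ⬝ᵥ x - star w ⬝ᵥ w) := by
    intro x w
    rw [star_sub, sub_dotProduct, dotProduct_sub, dotProduct_sub]
  rw [expand, cross1 A hA, cross2 A hA, sub_zero, zero_sub, sub_neg_eq_add, Complex.add_re,
    Fobj, Fobj_dot Δf τ A hA]

lemma resid_ge {K L : ℕ} (Δf : ℝ) (A : Matrix (Fin K) (Fin L) ℂ) (hA : IsUnit (Aᴴ * A))
    (h : Fin K → ℂ) (τ : ℝ) (b : Fin L → ℂ) :
    Fobj K Δf A h τ ≤ ‖(WithLp.equiv 2 (Fin K → ℂ)).symm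
        (h - (Matrix.diagonal (steer K Δf τ)) *ᵥ (A *ᵥ b))‖ ^ 2 := by
  rw [resid_sq Δf A hA h τ b]
  have h0 : 0 ≤ (star (A *ᵥ (b - ((Aᴴ * A)⁻¹ * Aᴴ) *ᵥ ((Matrix.diagonal (steer K Δf τ))ᴴ *ᵥ h))) ⬝ᵥ
       (A *ᵥ (b - ((Aᴴ * A)⁻¹ * Aᴴ) *ᵥ ((Matrix.diagonal (steer K Δf τ))ᴴ *ᵥ h)))).re := by
    rw [re_star_dot_self]; positivity
  linarith

lemma resid_eq_opt {K L : ℕ} (Δf : ℝ) (A : Matrix (Fin K) (Fin L) ℂ) (hA : IsUnit (Aᴴ * A))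
    (h : Fin K → ℂ) (τ : ℝ) :
    ‖(WithLp.equiv 2 (Fin K → ℂ)).symm
        (h - (Matrix.diagonal (steer K Δf τ)) *ᵥ
          (A *ᵥ (((Aᴴ * A)⁻¹ * Aᴴ) *ᵥ ((Matrix.diagonal (steer K Δf τ))ᴴ *ᵥ h))))‖ ^ 2 =
      Fobj K Δf A h τ := by
  rw [resid_sq Δf A hA h τ _, sub_self, Matrix.mulVec_zero]
  simp

lemma scalar_le (K : ℕ) (hK : 0 < K) (m s : ℝ) (hm : 0 < m) (hs : 0 < s) :
    -(K : ℝ) * Real.log s - (1 / s) * m ≤ -(K : ℝ) - (K : ℝ) * Real.log (m / K) := by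
  have hKpos : (0:ℝ) < K := Nat.cast_pos.mpr hK
  have ht : 0 < m / ((K:ℝ) * s) := by positivity
  have hlog := Real.log_le_sub_one_of_pos ht
  rw [Real.log_div (ne_of_gt hm) (by positivity),
    Real.log_mul (ne_of_gt hKpos) (ne_of_gt hs)] at hlog
  have h2 := mul_le_mul_of_nonneg_left hlog hKpos.le
  have h3 : (K:ℝ) * (m / ((K:ℝ)*s) - 1) = (1/s)*m - K := by field_simp
  rw [h3] at h2
  rw [Real.log_div (ne_of_gt hm) (ne_of_gt hKpos)]
  nlinarith

lemma log_pi_e : Real.log (Real.pi * Real.exp 1) = Real.log Real.pi + 1 := by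
  rw [Real.log_mul Real.pi_ne_zero (Real.exp_ne_zero 1), Real.log_exp]

/-- Proposition 1, subspace-based relative TO estimation: if `F(Δτ) > 0` then the
supremum of the log-likelihood over the nuisance parameters `b` and `s > 0` equals
`−K·log(π·e) − K·log(F(Δτ)/K)`; consequently, maximizing the profiled likelihood is equivalent
to minimizing `F`. -/
theorem subspace_relative_TO_mle
    (K L : ℕ) (hK : 0 < K) (hL : 0 < L) (Δf : ℝ) (hΔf : 0 < Δf)
    (A : Matrix (Fin K) (Fin L) ℂ) (hA : IsUnit (Aᴴ * A)) (h : Fin K → ℂ) :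
    (∀ Δτ : ℝ, 0 < Fobj K Δf A h Δτ →
      IsLUB {y : ℝ | ∃ b : Fin L → ℂ, ∃ s : ℝ, 0 < s ∧ y = loglik K Δf A h Δτ b s}
        (-(K : ℝ) * Real.log (Real.pi * Real.exp 1) -
          (K : ℝ) * Real.log (Fobj K Δf A h Δτ / K))) ∧
    (∀ Δτ₁ Δτ₂ : ℝ, 0 < Fobj K Δf A h Δτ₁ → 0 < Fobj K Δf A h Δτ₂ →
      ((-(K : ℝ) * Real.log (Real.pi * Real.exp 1) -
          (K : ℝ) * Real.log (Fobj K Δf A h Δτ₁ / K)) ≥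
        (-(K : ℝ) * Real.log (Real.pi * Real.exp 1) -
          (K : ℝ) * Real.log (Fobj K Δf A h Δτ₂ / K)) ↔
        Fobj K Δf A h Δτ₁ ≤ Fobj K Δf A h Δτ₂)) := by
  have hKpos : (0:ℝ) < K := Nat.cast_pos.mpr hK
  constructor
  · intro Δτ hF
    have hC : -(K : ℝ) * Real.log (Real.pi * Real.exp 1) -
          (K : ℝ) * Real.log (Fobj K Δf A h Δτ / K)
        = -(K:ℝ) * Real.log Real.pi - (K:ℝ) -
          (K:ℝ) * Real.log (Fobj K Δf A h Δτ / K) := by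
      rw [log_pi_e]; ring
    constructor
    · rintro y ⟨b, s, hs, rfl⟩
      rw [loglik, hC]
      have hres := resid_ge Δf A hA h Δτ b
      set N := ‖(WithLp.equiv 2 (Fin K → ℂ)).symm
        (h - (Matrix.diagonal (steer K Δf Δτ)) *ᵥ (A *ᵥ b))‖ ^ 2 with hN
      have h1 : (1/s) * Fobj K Δf A h Δτ ≤ (1/s) * N :=
        mul_le_mul_of_nonneg_left hres (by positivity)
      have h2 := scalar_le K hK (Fobj K Δf A h Δτ) s hF hs
      linarith
    · intro u hu
      refine hu ⟨((Aᴴ * A)⁻¹ * Aᴴ) *ᵥ ((Matrix.diagonal (steer K Δf Δτ))ᴴ *ᵥ h),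
        Fobj K Δf A h Δτ / K, div_pos hF hKpos, ?_⟩
      rw [loglik, resid_eq_opt Δf A hA h Δτ, hC]
      have hKm : (1 / (Fobj K Δf A h Δτ / K)) * Fobj K Δf A h Δτ = (K:ℝ) := by
        field_simp
      rw [hKm]
      ring
  · intro Δτ₁ Δτ₂ h1 h2
    rw [ge_iff_le, sub_le_sub_iff_left, mul_le_mul_iff_right₀ hKpos,
      Real.log_le_log_iff (div_pos h1 hKpos) (div_pos h2 hKpos),
      div_le_div_iff_of_pos_right hKpos]
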